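/- For ℤⁿ with word length ψ₁ and basis vectors u_j(ℓ) as above, the directional derivative coefficient satisfies ⟨δ_g, u_j(ℓ)⟩_{ψ₁} = 1 if g_j · ℓ > 0 and |g_j| ≥ |ℓ|, and 0 otherwise, for all g ∈ ℤⁿ, j ∈ [n], ℓ ∈ ℤ∖{0}. -/
import Mathlib


noncomputable def gromovZn (n : ℕ) (g h : Fin n → ℤ) : ℝ :=
  (((∑ j, |g j|) + (∑ j, |h j|) - (∑ j, |(h - g) j|) : ℤ) : ℝ) / 2

noncomputable def gromovFormZn (n : ℕ) (a b : (Fin n → ℤ) →₀ ℝ) : ℝ :=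
  ∑ g ∈ a.support, ∑ h ∈ b.support, a g * b h * gromovZn n g h

noncomputable def uZn (n : ℕ) (j : Fin n) (ℓ : ℤ) : (Fin n → ℤ) →₀ ℝ :=
  Finsupp.single (Pi.single j ℓ) 1 - Finsupp.single (Pi.single j (ℓ - ℓ.sign)) 1

lemma gromovFormZn_eq_sum (n : ℕ) (x y : (Fin n → ℤ) →₀ ℝ) :
    gromovFormZn n x y = x.sum fun p c => y.sum fun q d => c * d * gromovZn n p q := rfl

lemma gromovFormZn_single_sub (n : ℕ) (g a b : Fin n → ℤ) :
    gromovFormZn n (Finsupp.single g 1) (Finsupp.single a 1 - Finsupp.single b 1)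
      = gromovZn n g a - gromovZn n g b := by
  rw [gromovFormZn_eq_sum]
  rw [Finsupp.sum_single_index (by simp)]
  rw [Finsupp.sum_sub_index (by intros; ring)]
  rw [Finsupp.sum_single_index (by ring), Finsupp.sum_single_index (by ring)]
  ring

lemma gromov_single (n : ℕ) (g : Fin n → ℤ) (j : Fin n) (m : ℤ) :
    gromovZn n g (Pi.single j m) = ((|g j| + |m| - |m - g j| : ℤ) : ℝ) / 2 := by
  have h1 : ∑ k, |(Pi.single j m : Fin n → ℤ) k| = |m| := by
    rw [Fintype.sum_eq_single j (fun k hk => by simp [Pi.single_apply, hk])]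
    simp
  have h2 : ∑ k, |((Pi.single j m : Fin n → ℤ) - g) k|
      = (∑ k, |g k|) + (|m - g j| - |g j|) := by
    have : ∀ k, |((Pi.single j m : Fin n → ℤ) - g) k|
        = |g k| + (if k = j then |m - g j| - |g j| else 0) := by
      intro k
      by_cases hk : k = j
      · subst hk; simp [Pi.single_apply]
      · simp [Pi.single_apply, hk]
    rw [Finset.sum_congr rfl (fun k _ => this k), Finset.sum_add_distrib,
      Finset.sum_ite_eq' Finset.univ j (fun _ => |m - g j| - |g j|)]
    simp
  rw [gromovZn, h1, h2]
  push_cast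
  ring

lemma key_int (gj ℓ : ℤ) (hℓ : ℓ ≠ 0) :
    (|gj| + |ℓ| - |ℓ - gj|) - (|gj| + |ℓ - ℓ.sign| - |ℓ - ℓ.sign - gj|)
      = if 0 < gj * ℓ ∧ |ℓ| ≤ |gj| then 2 else 0 := by
  rcases lt_trichotomy ℓ 0 with h | h | h
  · rw [Int.sign_eq_neg_one_of_neg h]
    have hcond : 0 < gj * ℓ ↔ gj < 0 := by
      constructor
      · intro hp; by_contra hg; push_neg at hg
        nlinarith
      · intro hg; exact mul_pos_of_neg_of_neg hg h
    rw [if_congr (and_congr_left' hcond) rfl rfl]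
    rw [Int.abs_eq_natAbs gj, Int.abs_eq_natAbs ℓ, Int.abs_eq_natAbs (ℓ - gj),
      Int.abs_eq_natAbs (ℓ - (-1)), Int.abs_eq_natAbs (ℓ - (-1) - gj)]
    split <;> omega
  · exact absurd h hℓ
  · rw [Int.sign_eq_one_of_pos h]
    have hcond : 0 < gj * ℓ ↔ 0 < gj := by
      constructor
      · intro hp; by_contra hg; push_neg at hg
        nlinarith
      · intro hg; exact mul_pos hg h
    rw [if_congr (and_congr_left' hcond) rfl rfl]
    rw [Int.abs_eq_natAbs gj, Int.abs_eq_natAbs ℓ, Int.abs_eq_natAbs (ℓ - gj),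
      Int.abs_eq_natAbs (ℓ - 1), Int.abs_eq_natAbs (ℓ - 1 - gj)]
    split <;> omega

/-- ⟨δ_g, u_j(ℓ)⟩_{ψ₁} = 1 if g_j·ℓ > 0 and |g_j| ≥ |ℓ|, and 0 otherwise. -/
theorem deriv_coefficient_Zn (n : ℕ) (g : Fin n → ℤ) (j : Fin n) (ℓ : ℤ) (hℓ : ℓ ≠ 0) :
    gromovFormZn n (Finsupp.single g 1) (uZn n j ℓ)
      = if 0 < g j * ℓ ∧ |ℓ| ≤ |g j| then 1 else 0 := by
  rw [uZn, gromovFormZn_single_sub, gromov_single, gromov_single]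
  have := key_int (g j) ℓ hℓ
  have hcast : ((|g j| + |ℓ| - |ℓ - g j| : ℤ) : ℝ)
      - ((|g j| + |ℓ - ℓ.sign| - |ℓ - ℓ.sign - g j| : ℤ) : ℝ)
      = ((if 0 < g j * ℓ ∧ |ℓ| ≤ |g j| then 2 else 0 : ℤ) : ℝ) := by
    rw [← Int.cast_sub, this]
  rw [div_sub_div_same, hcast]
  split <;> norm_num
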